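/- arXiv:2106.14677 — 3 statements merged into one kernel-verified Lean document; each statement's English description precedes it below -/
import Mathlib

section
/- No subset of the unit circle S^1 ⊂ ℝ² of diameter (measured by geodesic/angular distance) strictly less than 2π/3 contains the origin in its convex hull. -/
open scoped RealInnerProductSpace

/-- No subset of the unit circle `S¹ ⊂ ℝ²` of geodesic (angular) diameter strictly less than
`2π/3` contains the origin in its convex hull. -/
theorem stmt0 (X : Set (EuclideanSpace ℝ (Fin 2)))
    (hX : X ⊆ Metric.sphere (0 : EuclideanSpace ℝ (Fin 2)) 1)
    (hdiam : ∃ δ : ℝ, δ < 2 * Real.pi / 3 ∧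
      ∀ x ∈ X, ∀ y ∈ X, Real.arccos ⟪x, y⟫ ≤ δ) :
    (0 : EuclideanSpace ℝ (Fin 2)) ∉ convexHull ℝ X := by
  intro h0
  obtain ⟨δ, hδlt, hδ⟩ := hdiam
  have hpi := Real.pi_pos
  -- X is nonempty
  obtain ⟨x₀, hx₀⟩ : X.Nonempty := by
    by_contra h
    rw [Set.not_nonempty_iff_eq_empty] at h
    simp [h] at h0
  have hδ0 : 0 ≤ δ := le_trans (Real.arccos_nonneg _) (hδ x₀ hx₀ x₀ hx₀)
  set c := Real.cos δ with hc
  have hδpi : δ ≤ Real.pi := by linarith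
  have hcgt : -(1/2 : ℝ) < c := by
    have h1 : Real.cos (2 * Real.pi / 3) < Real.cos δ :=
      Real.cos_lt_cos_of_nonneg_of_le_pi hδ0 (by linarith) hδlt
    have h2 : Real.cos (2 * Real.pi / 3) = -(1/2 : ℝ) := by
      have : 2 * Real.pi / 3 = Real.pi - Real.pi / 3 := by ring
      rw [this, Real.cos_pi_sub, Real.cos_pi_div_three]
    linarith
  have hc1 : c ≤ 1 := Real.cos_le_one δ
  have hnorm : ∀ x ∈ X, ‖x‖ = 1 := by
    intro x hx
    have := hX hx
    simpa using this
  have hinner : ∀ x ∈ X, ∀ y ∈ X, c ≤ ⟪x, y⟫ := by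
    intro x hx y hy
    have habs : |⟪x, y⟫| ≤ 1 := by
      have := abs_real_inner_le_norm x y
      rw [hnorm x hx, hnorm y hy] at this
      linarith
    rw [abs_le] at habs
    have hca := Real.cos_arccos habs.1 habs.2
    rw [← hca]
    exact Real.cos_le_cos_of_nonneg_of_le_pi (Real.arccos_nonneg _) hδpi (hδ x hx y hy)
  -- Carathéodory
  rw [convexHull_eq_union] at h0
  simp only [Set.mem_iUnion, exists_prop] at h0
  obtain ⟨t, hts, hai, ht0⟩ := h0
  have htsX : ↑t ⊆ X := hts
  -- card bound
  have hcard : (t.card : ℝ) ≤ 3 := by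
    have h1 := hai.card_le_finrank_succ
    have h2 : Module.finrank ℝ (vectorSpan ℝ (Set.range ((↑) : t → EuclideanSpace ℝ (Fin 2))))
        ≤ Module.finrank ℝ (EuclideanSpace ℝ (Fin 2)) := Submodule.finrank_le _
    have h3 : Module.finrank ℝ (EuclideanSpace ℝ (Fin 2)) = 2 := by simp
    rw [h3] at h2
    have h4 : Fintype.card t = t.card := Fintype.card_coe t
    have : t.card ≤ 3 := by omega
    exact_mod_cast this
  -- weights
  rw [Finset.convexHull_eq] at ht0
  obtain ⟨w, hw0, hw1, hwc⟩ := ht0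
  rw [Finset.centerMass_eq_of_sum_1 _ _ hw1] at hwc
  simp only [id] at hwc
  -- the quadratic form
  have hQ : (0 : ℝ) = ∑ y ∈ t, ∑ z ∈ t, w y * w z * ⟪y, z⟫ := by
    have : (0 : ℝ) = ⟪∑ y ∈ t, w y • y, ∑ z ∈ t, w z • z⟫ := by
      rw [hwc]; simp
    rw [this, sum_inner]
    refine Finset.sum_congr rfl fun y _ => ?_
    rw [inner_sum]
    refine Finset.sum_congr rfl fun z _ => ?_
    rw [real_inner_smul_left, real_inner_smul_right]
    ring
  -- lower bound for each diagonal
  have key : ∀ y ∈ t, (1 - c) * (w y) ^ 2 ≤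
      ∑ z ∈ t, (w y * w z * ⟪y, z⟫ - c * (w y * w z)) := by
    intro y hy
    have h1 : ∀ z ∈ t, 0 ≤ w y * w z * ⟪y, z⟫ - c * (w y * w z) := by
      intro z hz
      have hi := hinner y (htsX hy) z (htsX hz)
      have hnn : 0 ≤ w y * w z := mul_nonneg (hw0 y hy) (hw0 z hz)
      nlinarith [mul_le_mul_of_nonneg_left hi hnn]
    have h2 := Finset.single_le_sum h1 hy
    have hyy : ⟪(y : EuclideanSpace ℝ (Fin 2)), y⟫ = 1 := by
      rw [real_inner_self_eq_norm_sq, hnorm y (htsX hy)]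
      norm_num
    calc (1 - c) * (w y) ^ 2 = w y * w y * ⟪y, y⟫ - c * (w y * w y) := by
          rw [hyy]; ring
      _ ≤ _ := h2
  have hsum2 : (1 - c) * ∑ y ∈ t, (w y) ^ 2 ≤
      ∑ y ∈ t, ∑ z ∈ t, (w y * w z * ⟪y, z⟫ - c * (w y * w z)) := by
    rw [Finset.mul_sum]
    exact Finset.sum_le_sum key
  have hexpand : ∑ y ∈ t, ∑ z ∈ t, (w y * w z * ⟪y, z⟫ - c * (w y * w z))
      = (∑ y ∈ t, ∑ z ∈ t, w y * w z * ⟪y, z⟫) - c * 1 := by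
    have h1 : ∑ y ∈ t, ∑ z ∈ t, (w y * w z * ⟪y, z⟫ - c * (w y * w z))
        = (∑ y ∈ t, ∑ z ∈ t, w y * w z * ⟪y, z⟫) - ∑ y ∈ t, ∑ z ∈ t, c * (w y * w z) := by
      rw [← Finset.sum_sub_distrib]
      exact Finset.sum_congr rfl fun y _ => by rw [← Finset.sum_sub_distrib]
    rw [h1]
    congr 1
    have h2 : ∑ y ∈ t, ∑ z ∈ t, c * (w y * w z)
        = c * ((∑ y ∈ t, w y) * (∑ z ∈ t, w z)) := by
      rw [Finset.sum_mul_sum, Finset.mul_sum]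
      exact Finset.sum_congr rfl fun y _ => by rw [Finset.mul_sum]
    rw [h2, hw1, mul_one, mul_one]
  -- sum of squares bound
  have hsq : (1 : ℝ) ≤ 3 * ∑ y ∈ t, (w y) ^ 2 := by
    have h1 : (∑ y ∈ t, w y) ^ 2 ≤ (t.card : ℝ) * ∑ y ∈ t, (w y) ^ 2 := by
      exact_mod_cast sq_sum_le_card_mul_sum_sq (s := t) (f := w)
    rw [hw1] at h1
    have h2 : (0 : ℝ) ≤ ∑ y ∈ t, (w y) ^ 2 :=
      Finset.sum_nonneg fun y _ => sq_nonneg _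
    nlinarith
  -- conclude
  have hfinal : (1 - c) * ∑ y ∈ t, (w y) ^ 2 ≤ -c := by
    rw [hexpand, ← hQ] at hsum2
    linarith
  nlinarith [hfinal, hsq]
end

section
/- For any finite graph G, the box complex of the cone graph CG is isomorphic (as a ℤ/2-simplicial complex) to the suspension of the box complex of G. Concretely: for every face σ of B₀(G), both σ ∪ {•} and σ ∪ {−•} are faces of B₀(CG), where ± • are the two new vertices corresponding to the cone vertex, and every face of B₀(CG) arises this way or is a face of B₀(G). -/
/-- The cone over a graph: add a new vertex (`none`) adjacent to all vertices of `G`. -/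
def coneGraph {V : Type*} (G : SimpleGraph V) : SimpleGraph (Option V) where
  Adj a b := a ≠ b ∧ ∀ v w : V, a = some v → b = some w → G.Adj v w
  symm := by
    constructor
    rintro a b ⟨hab, h⟩
    exact ⟨hab.symm, fun v w hb ha => (h w v ha hb).symm⟩
  loopless := by constructor; rintro a ⟨haa, -⟩; exact haa rfl

/-- Faces of the box complex `B₀(G)`: vertices are `V ⊕ V` (positive and negative copies), and
`σ` is a face iff every positive vertex `v` and negative vertex `w` of `σ` satisfy `Adj v w`. -/
def IsBoxFace {V : Type*} (G : SimpleGraph V) (σ : Set (V ⊕ V)) : Prop :=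
  ∀ v w : V, Sum.inl v ∈ σ → Sum.inr w ∈ σ → G.Adj v w

lemma coneAdj {V : Type*} (G : SimpleGraph V) {v w : Option V}
    (h : ∀ v' w' : V, v = some v' → w = some w' → G.Adj v' w')
    (hne : v ≠ w) : (coneGraph G).Adj v w := ⟨hne, h⟩

/-- The box complex of the cone graph is the suspension of the box complex of `G`:
for every face `σ` of `B₀(G)` both `σ ∪ {•}` and `σ ∪ {−•}` are faces of `B₀(CG)`, and every
face of `B₀(CG)` is a face of `B₀(G)` or arises this way. -/
theorem stmt11 {V : Type*} [Fintype V] (G : SimpleGraph V) :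
    (∀ σ : Set (V ⊕ V), IsBoxFace G σ →
      IsBoxFace (coneGraph G) (Sum.map some some '' σ ∪ {Sum.inl none}) ∧
      IsBoxFace (coneGraph G) (Sum.map some some '' σ ∪ {Sum.inr none})) ∧
    (∀ τ : Set (Option V ⊕ Option V), IsBoxFace (coneGraph G) τ →
      ∃ σ : Set (V ⊕ V), IsBoxFace G σ ∧
        (τ = Sum.map some some '' σ ∨
         τ = Sum.map some some '' σ ∪ {Sum.inl none} ∨
         τ = Sum.map some some '' σ ∪ {Sum.inr none})) := by
  constructor
  · intro σ hσ
    have key : ∀ (c : (Option V ⊕ Option V)),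
        (c = Sum.inl none ∨ c = Sum.inr none) →
        IsBoxFace (coneGraph G) (Sum.map some some '' σ ∪ {c}) := by
      rintro c hc v w hv hw
      rcases hv with ⟨x, hx, hxe⟩ | hv <;> rcases hw with ⟨y, hy, hye⟩ | hw
      · cases x with
        | inl a =>
          cases y with
          | inl b => simp [Sum.map] at hxe hye
          | inr b =>
            simp [Sum.map] at hxe hye
            subst hxe; subst hye
            exact ⟨by simp [(hσ a b hx hy).ne], fun v' w' hv' hw' => by
              obtain rfl := Option.some.inj hv'
              obtain rfl := Option.some.inj hw'
              exact hσ _ _ hx hy⟩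
        | inr a => simp [Sum.map] at hxe
      · cases x with
        | inl a =>
          simp [Sum.map] at hxe; subst hxe
          simp only [Set.mem_singleton_iff] at hw
          have : w = none := by
            rcases hc with rfl | rfl
            · simp at hw
            · simpa using hw
          subst this
          exact ⟨by simp, fun v' w' hv' hw' => by simp at hw'⟩
        | inr a => simp [Sum.map] at hxe
      · cases y with
        | inr b =>
          simp [Sum.map] at hye; subst hye
          simp only [Set.mem_singleton_iff] at hv
          have : v = none := by
            rcases hc with rfl | rfl
            · simpa using hv
            · simp at hv
          subst this
          exact ⟨by simp, fun v' w' hv' hw' => by simp at hv'⟩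
        | inl b => simp [Sum.map] at hye
      · simp only [Set.mem_singleton_iff] at hv hw
        rcases hc with rfl | rfl
        · simp at hw
        · simp at hv
    exact ⟨key _ (Or.inl rfl), key _ (Or.inr rfl)⟩
  · intro τ hτ
    refine ⟨{x | Sum.map some some x ∈ τ}, ?_, ?_⟩
    · intro v w hv hw
      exact ((hτ _ _ hv hw).2 v w rfl rfl)
    · have himg : Sum.map some some '' {x | Sum.map some some x ∈ τ} =
          τ \ {Sum.inl none, Sum.inr none} := by
        ext z
        constructor
        · rintro ⟨x, hx, rfl⟩
          refine ⟨hx, ?_⟩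
          cases x <;> simp [Sum.map]
        · rintro ⟨hz, hz2⟩
          cases z with
          | inl a =>
            cases a with
            | none => exact absurd (by simp) hz2
            | some a => exact ⟨Sum.inl a, hz, rfl⟩
          | inr a =>
            cases a with
            | none => exact absurd (by simp) hz2
            | some a => exact ⟨Sum.inr a, hz, rfl⟩
      have hnotboth : ¬ (Sum.inl (none : Option V) ∈ τ ∧ Sum.inr (none : Option V) ∈ τ) := by
        rintro ⟨h1, h2⟩
        exact (coneGraph G).loopless.irrefl none (hτ none none h1 h2)
      by_cases h1 : Sum.inl (none : Option V) ∈ τ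
      · have h2 : Sum.inr (none : Option V) ∉ τ := fun h2 => hnotboth ⟨h1, h2⟩
        right; left
        rw [himg]
        ext z
        simp only [Set.mem_union, Set.mem_diff, Set.mem_insert_iff, Set.mem_singleton_iff]
        constructor
        · intro hz
          by_cases hzl : z = Sum.inl none
          · right; exact hzl
          · left; exact ⟨hz, by rintro (rfl | rfl); exact hzl rfl; exact h2 hz⟩
        · rintro (⟨hz, -⟩ | rfl) <;> [exact hz; exact h1]
      · by_cases h2 : Sum.inr (none : Option V) ∈ τ
        · right; right
          rw [himg]
          ext z
          simp only [Set.mem_union, Set.mem_diff, Set.mem_insert_iff, Set.mem_singleton_iff]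
          constructor
          · intro hz
            by_cases hzr : z = Sum.inr none
            · right; exact hzr
            · left; exact ⟨hz, by rintro (rfl | rfl); exact h1 hz; exact hzr rfl⟩
          · rintro (⟨hz, -⟩ | rfl) <;> [exact hz; exact h2]
        · left
          rw [himg]
          ext z
          simp only [Set.mem_diff, Set.mem_insert_iff, Set.mem_singleton_iff]
          constructor
          · intro hz
            exact ⟨hz, by rintro (rfl | rfl); exact h1 hz; exact h2 hz⟩
          · rintro ⟨hz, -⟩; exact hz
end

section
/- Let A₁, …, A_{n+1} be a cover of S^d such that A₁, …, A_n are each open or closed, no Aᵢ contains a pair of antipodal points, and every subset of S^d of diameter at most t is contained in some Aᵢ. If {x₁,…,x_m} ⊂ S^d has diameter at most t, then there exists a single index j with 1 ≤ j ≤ n such that either {x₁,…,x_m} ⊆ A_j or {−x₁,…,−x_m} ⊆ A_j. -/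
open scoped RealInnerProductSpace

/-- The unit sphere `S^d`. -/
abbrev Sph (d : ℕ) := Metric.sphere (0 : EuclideanSpace ℝ (Fin (d + 1))) 1

/-- The geodesic (angular) distance on the unit sphere. -/
noncomputable def gdist {d : ℕ} (x y : Sph d) : ℝ :=
  Real.arccos ⟪(x : EuclideanSpace ℝ (Fin (d + 1))), (y : EuclideanSpace ℝ (Fin (d + 1)))⟫

lemma gdist_neg_neg {d : ℕ} (x y : Sph d) : gdist (-x) (-y) = gdist x y := by
  simp [gdist, coe_neg_sphere, inner_neg_neg]

/-- Let `A₁, …, A_{n+1}` cover `S^d`, with `A₁, …, A_n` each open or closed, no `Aᵢ` containing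
antipodal points, and every subset of diameter at most `t` contained in some `Aᵢ`.  If
`{x₁, …, x_m}` has diameter at most `t`, then some single `A_j` with `j ≤ n` contains all the
`xᵢ` or all the `−xᵢ`. -/
theorem stmt13 (d n m : ℕ) (t : ℝ) (A : Fin (n + 1) → Set (Sph d))
    (hcover : (⋃ i, A i) = Set.univ)
    (hopcl : ∀ j : Fin n, IsOpen (A j.castSucc) ∨ IsClosed (A j.castSucc))
    (hanti : ∀ i, ∀ x : Sph d, ¬ (x ∈ A i ∧ -x ∈ A i))
    (hsmall : ∀ B : Set (Sph d), (∀ y ∈ B, ∀ z ∈ B, gdist y z ≤ t) → ∃ i, B ⊆ A i)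
    (x : Fin m → Sph d) (hx : ∀ i j, gdist (x i) (x j) ≤ t) :
    ∃ j : Fin n, (∀ i, x i ∈ A j.castSucc) ∨ (∀ i, -(x i) ∈ A j.castSucc) := by
  -- the sphere is nonempty
  obtain ⟨p, hp⟩ : (Metric.sphere (0 : EuclideanSpace ℝ (Fin (d + 1))) 1).Nonempty :=
    NormedSpace.sphere_nonempty.mpr (by norm_num)
  set P : Sph d := ⟨p, hp⟩
  -- n = 0 is impossible
  rcases Nat.eq_zero_or_pos n with hn | hn
  · exfalso
    subst hn
    have h1 : P ∈ ⋃ i, A i := hcover ▸ Set.mem_univ _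
    have h2 : -P ∈ ⋃ i, A i := hcover ▸ Set.mem_univ _
    obtain ⟨_, ⟨i, rfl⟩, hP⟩ := h1
    obtain ⟨_, ⟨j, rfl⟩, hnP⟩ := h2
    exact hanti 0 P ⟨by rwa [Subsingleton.elim (0 : Fin 1) i],
      by rwa [Subsingleton.elim (0 : Fin 1) j]⟩
  rcases Nat.eq_zero_or_pos m with hm | hm
  · subst hm
    exact ⟨⟨0, hn⟩, Or.inl fun i => i.elim0⟩
  obtain ⟨i₁, h1⟩ := hsmall (Set.range x) (by
    rintro y ⟨a, rfl⟩ z ⟨b, rfl⟩; exact hx a b)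
  obtain ⟨i₂, h2⟩ := hsmall (Set.range fun k => -(x k)) (by
    rintro y ⟨a, rfl⟩ z ⟨b, rfl⟩; rw [gdist_neg_neg]; exact hx a b)
  by_cases h1n : (i₁ : ℕ) < n
  · refine ⟨⟨i₁, h1n⟩, Or.inl fun i => ?_⟩
    have : (⟨(i₁ : ℕ), h1n⟩ : Fin n).castSucc = i₁ := by ext; simp
    rw [this]
    exact h1 ⟨i, rfl⟩
  by_cases h2n : (i₂ : ℕ) < n
  · refine ⟨⟨i₂, h2n⟩, Or.inr fun i => ?_⟩
    have : (⟨(i₂ : ℕ), h2n⟩ : Fin n).castSucc = i₂ := by ext; simp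
    rw [this]
    exact h2 ⟨i, rfl⟩
  · exfalso
    have e1 : i₁ = i₂ := by
      ext
      have := i₁.isLt
      have := i₂.isLt
      omega
    refine hanti i₂ (x ⟨0, hm⟩) ⟨?_, h2 ⟨⟨0, hm⟩, rfl⟩⟩
    rw [← e1]
    exact h1 ⟨⟨0, hm⟩, rfl⟩
end
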